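/- (Theorem 1, exact form) Let n ≥ 2, let δ ∈ (0,1), and define Δ = 4n² + 8nδ(n − 1) and q₁ = (2n(1+δ) − √Δ)/(2(2n + δn²)). Sample M points i.i.d. uniformly from Fin n. If (1 − 1/n)^M ≤ q₁, then the probability that at least one cell of Fin n is uncovered by the M samples is at most δ/2. -/

import Mathlib

open MeasureTheory ENNReal

theorem q1_le_aux (n : ℕ) (hn : 2 ≤ n) (δ : ℝ) (hδ0 : 0 < δ) (hδ1 : δ < 1) :
    (2 * (n : ℝ) * (1 + δ) - Real.sqrt (4 * (n : ℝ) ^ 2 + 8 * (n : ℝ) * δ * ((n : ℝ) - 1)))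
        / (2 * (2 * (n : ℝ) + δ * (n : ℝ) ^ 2)) ≤ δ / (2 * n) := by
  have hn2 : (2:ℝ) ≤ n := by exact_mod_cast hn
  have hn0 : (0:ℝ) < n := by linarith
  have hδ2 : δ^2 < 1 := by nlinarith
  have hδn : 0 ≤ δ*((n:ℝ)-1) := mul_nonneg hδ0.le (by linarith)
  have hr0 : 0 ≤ 2*(n:ℝ) + 2*δ*((n:ℝ)-1) - δ^2*(n:ℝ) := by
    nlinarith [mul_lt_mul_of_pos_right hδ2 hn0]
  have h1 : δ^4*(n:ℝ)^2 ≤ δ^3*(n:ℝ)^2 := by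
    have : δ^4 ≤ δ^3 := by nlinarith [pow_pos hδ0 3]
    nlinarith [sq_nonneg (n:ℝ)]
  have h2 : δ^3*(n:ℝ)^2 ≤ 4*δ^3*((n:ℝ)*((n:ℝ)-1)) := by
    have h3n : (n:ℝ)^2 ≤ 4*((n:ℝ)*((n:ℝ)-1)) := by nlinarith
    have hp : 0 ≤ δ^3 := by positivity
    nlinarith [mul_le_mul_of_nonneg_left h3n hp]
  have h3 : δ^2*((n:ℝ)-1)^2 ≤ δ^2*(n:ℝ)^2 := by
    have : ((n:ℝ)-1)^2 ≤ (n:ℝ)^2 := by nlinarith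
    nlinarith [sq_nonneg δ]
  have hrΔ : (2*(n:ℝ) + 2*δ*((n:ℝ)-1) - δ^2*(n:ℝ))^2
      ≤ 4 * (n : ℝ) ^ 2 + 8 * (n : ℝ) * δ * ((n : ℝ) - 1) := by nlinarith
  have hsq : 2*(n:ℝ) + 2*δ*((n:ℝ)-1) - δ^2*(n:ℝ)
      ≤ Real.sqrt (4 * (n : ℝ) ^ 2 + 8 * (n : ℝ) * δ * ((n : ℝ) - 1)) := by
    calc 2*(n:ℝ) + 2*δ*((n:ℝ)-1) - δ^2*(n:ℝ)
        = Real.sqrt ((2*(n:ℝ) + 2*δ*((n:ℝ)-1) - δ^2*(n:ℝ))^2) := (Real.sqrt_sq hr0).symm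
      _ ≤ _ := Real.sqrt_le_sqrt hrΔ
  have hden : 0 < 2 * (2 * (n : ℝ) + δ * (n : ℝ) ^ 2) := by nlinarith
  rw [div_le_div_iff₀ hden (by linarith)]
  nlinarith

theorem uncovered_measure_le (n M : ℕ) (hn : 2 ≤ n) :
    ((@PMF.uniformOfFintype (Fin M → Fin n) _ ⟨fun _ => ⟨0, Nat.zero_lt_of_lt hn⟩⟩).toMeasure
        {ω | ∃ i : Fin n, ∀ j, ω j ≠ i}).toReal
      ≤ (n : ℝ) * ((n : ℝ) - 1)^M / (n : ℝ)^M := by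
  classical
  haveI : Nonempty (Fin M → Fin n) := ⟨fun _ => ⟨0, by omega⟩⟩
  set S : Set (Fin M → Fin n) := {ω | ∃ i : Fin n, ∀ j, ω j ≠ i} with hS
  have hmeas : ((PMF.uniformOfFintype (Fin M → Fin n)).toMeasure S).toReal
      = (S.toFinset.card : ℝ) / (n : ℝ)^M := by
    rw [PMF.toMeasure_apply_fintype]
    rw [Finset.sum_indicator_eq_sum_filter]
    simp only [PMF.uniformOfFintype_apply, Finset.sum_const, nsmul_eq_mul]
    have h1 : Finset.filter (· ∈ S) Finset.univ = S.toFinset := by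
      ext ω; simp
    have hcardF : (Fintype.card (Fin M → Fin n) : ℝ≥0∞) = ((n:ℕ) : ℝ≥0∞)^M := by
      simp [Fintype.card_fun]
    rw [h1, hcardF]
    rw [ENNReal.toReal_mul, ENNReal.toReal_inv]
    simp [div_eq_mul_inv]
  rw [hmeas]
  have hcard : S.toFinset.card ≤ n * (n-1)^M := by
    have hsub : S.toFinset ⊆ Finset.univ.biUnion
        (fun i : Fin n => Fintype.piFinset (fun _ : Fin M => Finset.univ.erase i)) := by
      intro ω hω
      simp only [Set.mem_toFinset, hS, Set.mem_setOf_eq] at hω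
      obtain ⟨i, hi⟩ := hω
      simp only [Finset.mem_biUnion, Finset.mem_univ, true_and]
      exact ⟨i, by simp [Fintype.mem_piFinset, hi]⟩
    calc S.toFinset.card ≤ _ := Finset.card_le_card hsub
      _ ≤ ∑ i : Fin n, (Fintype.piFinset (fun _ : Fin M => Finset.univ.erase i)).card :=
          Finset.card_biUnion_le
      _ = n * (n-1)^M := by
          simp [Fintype.card_piFinset, Finset.card_erase_of_mem, Finset.prod_const]
  have hcast : ((n * (n-1)^M : ℕ) : ℝ) = (n:ℝ) * ((n:ℝ)-1)^M := by
    push_cast [Nat.cast_sub (by omega : 1 ≤ n)]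
    ring
  have hnum : (S.toFinset.card : ℝ) ≤ (n:ℝ) * ((n:ℝ)-1)^M := by
    rw [← hcast]; exact_mod_cast hcard
  gcongr

/-- Theorem 1, exact form: For n ≥ 2, δ ∈ (0,1), with
Δ = 4n² + 8nδ(n-1) and q₁ = (2n(1+δ) - √Δ)/(2(2n+δn²)), if `(1 - 1/n)^M ≤ q₁`
then the probability (under M i.i.d. uniform samples on `Fin n`) that at least one
cell is uncovered is at most δ/2. -/
theorem sample_complexity_exact (n M : ℕ) (hn : 2 ≤ n) (δ : ℝ) (hδ : δ ∈ Set.Ioo (0 : ℝ) 1)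
    (hM : (1 - 1 / (n : ℝ)) ^ M ≤
      (2 * (n : ℝ) * (1 + δ) - Real.sqrt (4 * (n : ℝ) ^ 2 + 8 * (n : ℝ) * δ * ((n : ℝ) - 1)))
        / (2 * (2 * (n : ℝ) + δ * (n : ℝ) ^ 2))) :
    ((@PMF.uniformOfFintype (Fin M → Fin n) _ ⟨fun _ => ⟨0, by omega⟩⟩).toMeasure
        {ω | ∃ i : Fin n, ∀ j, ω j ≠ i}).toReal ≤ δ / 2 := by
  obtain ⟨hδ0, hδ1⟩ := hδ
  have hn2 : (2:ℝ) ≤ n := by exact_mod_cast hn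
  have hn0 : (0:ℝ) < n := by linarith
  have hq1 : (1 - 1 / (n : ℝ)) ^ M ≤ δ / (2 * n) :=
    hM.trans (q1_le_aux n hn δ hδ0 hδ1)
  have hrw : (n : ℝ) * ((n : ℝ) - 1)^M / (n : ℝ)^M = (n:ℝ) * (1 - 1/(n:ℝ))^M := by
    rw [mul_div_assoc, ← div_pow]
    congr 2
    field_simp
  calc ((@PMF.uniformOfFintype (Fin M → Fin n) _ ⟨fun _ => ⟨0, by omega⟩⟩).toMeasure
        {ω | ∃ i : Fin n, ∀ j, ω j ≠ i}).toReal
      ≤ (n : ℝ) * ((n : ℝ) - 1)^M / (n : ℝ)^M := uncovered_measure_le n M hn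
    _ = (n:ℝ) * (1 - 1/(n:ℝ))^M := hrw
    _ ≤ (n:ℝ) * (δ / (2 * n)) := by
        exact mul_le_mul_of_nonneg_left hq1 hn0.le
    _ = δ / 2 := by field_simp
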